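/- If a measurable function r : [0,∞) → [0,∞) satisfies E|r(s)|² ≤ C⟨s⟩^{-1} (so (E|r(s)|²)^{1/2} ≤ C^{1/2}⟨s⟩^{-1/2}), then E|∫₀^t r(t-s) ⟨s⟩^{-3/2} ds|² ≤ C₁(1+t)^{-1} for all t ≥ 0. -/

import Mathlib

open MeasureTheory intervalIntegral


/-- Cauchy–Schwarz with weight: `(∫ f w)² ≤ (∫ w) (∫ f² w)`. -/
lemma cs_weight {α : Type*} [MeasurableSpace α] (ν : Measure α) (f w : α → ℝ)
    (hw : ∀ x, 0 ≤ w x)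
    (hfm : AEStronglyMeasurable f ν) (hwm : AEStronglyMeasurable w ν)
    (hf2w : Integrable (fun x => f x ^ 2 * w x) ν) (hwi : Integrable w ν) :
    (∫ x, f x * w x ∂ν) ^ 2 ≤ (∫ x, w x ∂ν) * ∫ x, f x ^ 2 * w x ∂ν := by
  set F : α → ℝ := fun x => |f x| * Real.sqrt (w x) with hF
  set G : α → ℝ := fun x => Real.sqrt (w x) with hG
  have hFm : AEStronglyMeasurable F ν := (hfm.norm.congr (by simp [Real.norm_eq_abs])).mul
    (Real.continuous_sqrt.comp_aestronglyMeasurable hwm)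
  have hGm : AEStronglyMeasurable G ν := Real.continuous_sqrt.comp_aestronglyMeasurable hwm
  have hF2 : ∀ x, F x ^ 2 = f x ^ 2 * w x := by
    intro x; rw [hF]; rw [mul_pow, sq_abs, Real.sq_sqrt (hw x)]
  have hG2 : ∀ x, G x ^ 2 = w x := fun x => Real.sq_sqrt (hw x)
  have hFL2 : MemLp F 2 ν := (memLp_two_iff_integrable_sq hFm).2 (by simpa [hF2] using hf2w)
  have hGL2 : MemLp G 2 ν := (memLp_two_iff_integrable_sq hGm).2 (by simpa [hG2] using hwi)
  have conj : (2:ℝ).HolderConjugate 2 := (Real.holderConjugate_iff_eq_conjExponent one_lt_two).2 (by norm_num)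
  have hold := integral_mul_le_Lp_mul_Lq_of_nonneg conj
      (ae_of_all _ fun x => mul_nonneg (abs_nonneg _) (Real.sqrt_nonneg _))
      (ae_of_all _ fun x => Real.sqrt_nonneg _)
      (by simpa using hFL2) (by simpa using hGL2)
  have hFG : ∀ x, F x * G x = |f x| * |w x| := by
    intro x
    rw [hF, hG, abs_of_nonneg (hw x), mul_assoc, Real.mul_self_sqrt (hw x)]
  have h1 : |∫ x, f x * w x ∂ν| ≤ ∫ x, F x * G x ∂ν := by
    calc |∫ x, f x * w x ∂ν| ≤ ∫ x, |f x| * |w x| ∂ν := by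
          simpa [Real.norm_eq_abs, abs_mul] using
            norm_integral_le_integral_norm (fun x => f x * w x) (μ := ν)
      _ = ∫ x, F x * G x ∂ν := integral_congr_ae (ae_of_all _ fun x => (hFG x).symm)
  have hr2 : ∀ y : ℝ, 0 ≤ y → y ^ (2:ℝ) = y ^ (2:ℕ) := by
    intro y hy
    rw [show ((2:ℝ)) = ((2:ℕ):ℝ) by norm_num, Real.rpow_natCast]
  have hFGnn : 0 ≤ ∫ x, F x * G x ∂ν :=
    integral_nonneg fun x => mul_nonneg (mul_nonneg (abs_nonneg _) (Real.sqrt_nonneg _)) (Real.sqrt_nonneg _)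
  have hIF : 0 ≤ ∫ x, F x ^ (2:ℝ) ∂ν := integral_nonneg fun x => Real.rpow_nonneg (mul_nonneg (abs_nonneg _) (Real.sqrt_nonneg _)) _
  have hIG : 0 ≤ ∫ x, G x ^ (2:ℝ) ∂ν := integral_nonneg fun x => Real.rpow_nonneg (Real.sqrt_nonneg _) _
  calc (∫ x, f x * w x ∂ν) ^ 2 = |∫ x, f x * w x ∂ν| ^ 2 := (sq_abs _).symm
    _ ≤ (∫ x, F x * G x ∂ν) ^ 2 := pow_le_pow_left₀ (abs_nonneg _) h1 2
    _ ≤ ((∫ x, F x ^ (2:ℝ) ∂ν) ^ ((1:ℝ)/2) * (∫ x, G x ^ (2:ℝ) ∂ν) ^ ((1:ℝ)/2)) ^ 2 :=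
        pow_le_pow_left₀ hFGnn hold 2
    _ = (∫ x, F x ^ (2:ℝ) ∂ν) * (∫ x, G x ^ (2:ℝ) ∂ν) := by
        rw [mul_pow, ← Real.rpow_natCast ((∫ x, F x ^ (2:ℝ) ∂ν) ^ ((1:ℝ)/2)) 2,
          ← Real.rpow_natCast ((∫ x, G x ^ (2:ℝ) ∂ν) ^ ((1:ℝ)/2)) 2,
          ← Real.rpow_mul hIF, ← Real.rpow_mul hIG]
        norm_num
    _ = (∫ x, w x ∂ν) * ∫ x, f x ^ 2 * w x ∂ν := by
        rw [mul_comm]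
        congr 1
        · refine integral_congr_ae (ae_of_all _ fun x => ?_)
          show G x ^ (2:ℝ) = w x
          rw [hr2 _ (Real.sqrt_nonneg _)]; exact hG2 x
        · refine integral_congr_ae (ae_of_all _ fun x => ?_)
          show F x ^ (2:ℝ) = f x ^ 2 * w x
          rw [hr2 _ (mul_nonneg (abs_nonneg _) (Real.sqrt_nonneg _))]; exact hF2 x

noncomputable def gg (s : ℝ) : ℝ := (1 + s ^ 2) ^ (-(3 : ℝ) / 4)
noncomputable def hh (s : ℝ) : ℝ := (1 + s ^ 2) ^ (-(1 : ℝ) / 2)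

lemma base_pos (s : ℝ) : (0:ℝ) < 1 + s ^ 2 := by positivity

lemma gg_cont : Continuous gg :=
  Continuous.rpow_const (by continuity) (fun s => Or.inl (ne_of_gt (base_pos s)))

lemma hh_cont : Continuous hh :=
  Continuous.rpow_const (by continuity) (fun s => Or.inl (ne_of_gt (base_pos s)))

lemma gg_nonneg (s : ℝ) : 0 ≤ gg s := Real.rpow_nonneg (base_pos s).le _
lemma hh_nonneg (s : ℝ) : 0 ≤ hh s := Real.rpow_nonneg (base_pos s).le _
lemma gg_le_one (s : ℝ) : gg s ≤ 1 :=
  Real.rpow_le_one_of_one_le_of_nonpos (by nlinarith [sq_nonneg s]) (by norm_num)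
lemma hh_le_one (s : ℝ) : hh s ≤ 1 :=
  Real.rpow_le_one_of_one_le_of_nonpos (by nlinarith [sq_nonneg s]) (by norm_num)

lemma hh_eq (s : ℝ) : hh s = (Real.sqrt (1 + s ^ 2))⁻¹ := by
  rw [hh, Real.sqrt_eq_rpow, neg_div, Real.rpow_neg (base_pos s).le]

lemma hh_le (s : ℝ) (hs : 0 ≤ s) : hh s ≤ 2 / (1 + s) := by
  rw [hh_eq]
  have hx : 0 < Real.sqrt (1 + s ^ 2) := Real.sqrt_pos.2 (base_pos s)
  have hx2 : Real.sqrt (1 + s ^ 2) ^ 2 = 1 + s ^ 2 := Real.sq_sqrt (base_pos s).le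
  rw [inv_eq_one_div, div_le_div_iff₀ hx (by linarith)]
  nlinarith [hx.le, sq_nonneg (s - 1), sq_nonneg (2 * Real.sqrt (1 + s^2) - (1+s))]

lemma gg_eq (s : ℝ) : gg s = ((1 + s ^ 2) ^ ((3:ℝ)/4))⁻¹ := by
  rw [gg, neg_div, Real.rpow_neg (base_pos s).le]

lemma pow_three_half (x : ℝ) (hx : 0 ≤ x) : ((x ^ 2 : ℝ)) ^ ((3:ℝ)/4) = x * Real.sqrt x := by
  rw [← Real.rpow_natCast x 2, ← Real.rpow_mul hx]
  rw [show ((2:ℕ):ℝ) * ((3:ℝ)/4) = 1 + 1/2 by norm_num, Real.rpow_add' hx (by norm_num),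
    Real.rpow_one, Real.sqrt_eq_rpow]

lemma two_mul_sq (s : ℝ) : (1 + s) ^ 2 ≤ 2 * (1 + s ^ 2) := by nlinarith [sq_nonneg (s - 1)]

lemma key_rpow_le (x y : ℝ) (hx : 0 ≤ x) (hxy : (1 + x) ^ 2 ≤ 2 * (1 + y ^ 2)) :
    (1 + x) * Real.sqrt (1 + x) ≤ 2 * (1 + y ^ 2) ^ ((3:ℝ)/4) := by
  have h1 : (0:ℝ) ≤ 1 + x := by linarith
  have h2 := Real.rpow_le_rpow (sq_nonneg (1 + x)) hxy (by norm_num : (0:ℝ) ≤ (3:ℝ)/4)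
  rw [pow_three_half _ h1] at h2
  refine h2.trans ?_
  rw [Real.mul_rpow (by norm_num) (base_pos y).le]
  have h3 : (2:ℝ) ^ ((3:ℝ)/4) ≤ 2 := by
    calc (2:ℝ) ^ ((3:ℝ)/4) ≤ 2 ^ (1:ℝ) :=
          Real.rpow_le_rpow_of_exponent_le one_le_two (by norm_num)
      _ = 2 := Real.rpow_one 2
  exact mul_le_mul_of_nonneg_right h3 (Real.rpow_nonneg (base_pos y).le _)

lemma inv_le_of_le (a b c : ℝ) (ha : 0 < a) (hb : 0 < b) (h : b ≤ c * a) (hc : 0 < c) :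
    a⁻¹ ≤ c * b⁻¹ := by
  rw [inv_eq_one_div, inv_eq_one_div, mul_one_div, div_le_div_iff₀ ha hb]
  linarith

lemma gg_le2 (s : ℝ) (hs : 0 ≤ s) : gg s ≤ 2 * ((1 + s) * Real.sqrt (1 + s))⁻¹ := by
  rw [gg_eq]
  have ha : (0:ℝ) < (1 + s ^ 2) ^ ((3:ℝ)/4) := Real.rpow_pos_of_pos (base_pos s) _
  have hb : (0:ℝ) < (1 + s) * Real.sqrt (1 + s) := by positivity
  have h := key_rpow_le s s hs (two_mul_sq s)
  calc ((1 + s ^ 2) ^ ((3:ℝ)/4))⁻¹ ≤ 2 * ((1 + s) * Real.sqrt (1 + s))⁻¹ :=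
    inv_le_of_le _ _ _ ha hb h two_pos

lemma key_rpow_le' (c x y : ℝ) (hc : 1 ≤ c) (hx : 0 ≤ x) (hxy : (1 + x) ^ 2 ≤ c * (1 + y ^ 2)) :
    (1 + x) * Real.sqrt (1 + x) ≤ c * (1 + y ^ 2) ^ ((3:ℝ)/4) := by
  have h2 := Real.rpow_le_rpow (sq_nonneg (1 + x)) hxy (by norm_num : (0:ℝ) ≤ (3:ℝ)/4)
  rw [pow_three_half _ (by linarith)] at h2
  refine h2.trans ?_
  rw [Real.mul_rpow (by linarith) (base_pos y).le]
  have h3 : c ^ ((3:ℝ)/4) ≤ c := by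
    calc c ^ ((3:ℝ)/4) ≤ c ^ (1:ℝ) :=
          Real.rpow_le_rpow_of_exponent_le hc (by norm_num)
      _ = c := Real.rpow_one c
  exact mul_le_mul_of_nonneg_right h3 (Real.rpow_nonneg (base_pos y).le _)

lemma gg_le_Q (t s : ℝ) (ht : 0 ≤ t) (hts : t / 2 ≤ s) :
    gg s ≤ 8 * ((1 + t) * Real.sqrt (1 + t))⁻¹ := by
  rw [gg_eq]
  have hs0 : 0 ≤ s := le_trans (by linarith) hts
  have hsq : (1 + t) ^ 2 ≤ 8 * (1 + s ^ 2) := by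
    nlinarith [mul_nonneg (sub_nonneg.2 hts) (by linarith : (0:ℝ) ≤ s + t / 2),
      sq_nonneg (t - 1)]
  have h := key_rpow_le' 8 t s (by norm_num) ht hsq
  have ha : (0:ℝ) < (1 + s ^ 2) ^ ((3:ℝ)/4) := Real.rpow_pos_of_pos (base_pos s) _
  have hb : (0:ℝ) < (1 + t) * Real.sqrt (1 + t) := by positivity
  exact inv_le_of_le _ _ _ ha hb h (by norm_num)

lemma int32 (t : ℝ) (ht : 0 ≤ t) :
    ∫ s in (0:ℝ)..t, ((1 + s) * Real.sqrt (1 + s))⁻¹ ≤ 2 := by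
  have hderiv : ∀ x ∈ Set.uIcc (0:ℝ) t,
      HasDerivAt (fun s : ℝ => -2 * (Real.sqrt (1 + s))⁻¹)
        (((1 + x) * Real.sqrt (1 + x))⁻¹) x := by
    intro x hx
    rw [Set.uIcc_of_le ht] at hx
    have hX : (0:ℝ) < 1 + x := by have := hx.1; linarith
    have hsq : (0:ℝ) < Real.sqrt (1 + x) := Real.sqrt_pos.2 hX
    have h1 : HasDerivAt (fun s : ℝ => 1 + s) 1 x := (hasDerivAt_id x).const_add 1
    have h2 : HasDerivAt (fun s : ℝ => Real.sqrt (1 + s)) (1 / (2 * Real.sqrt (1 + x)) * 1) x :=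
      (Real.hasDerivAt_sqrt (ne_of_gt hX)).comp x h1
    have h3 := (h2.inv (ne_of_gt hsq)).const_mul (-2 : ℝ)
    refine HasDerivAt.congr_deriv h3 ?_
    have hs2 : Real.sqrt (1 + x) ^ 2 = 1 + x := Real.sq_sqrt hX.le
    rw [hs2]
    field_simp
  have hcont : IntervalIntegrable (fun s : ℝ => ((1 + s) * Real.sqrt (1 + s))⁻¹)
      volume 0 t := by
    apply ContinuousOn.intervalIntegrable
    apply ContinuousOn.inv₀
    · fun_prop
    · intro x hx
      rw [Set.uIcc_of_le ht] at hx
      have hX : (0:ℝ) < 1 + x := by have := hx.1; linarith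
      positivity
  rw [integral_eq_sub_of_hasDerivAt hderiv hcont]
  have h1 : (0:ℝ) ≤ (Real.sqrt (1 + t))⁻¹ := by positivity
  simp only [add_zero, Real.sqrt_one, inv_one, mul_one]
  linarith

lemma intlog (t : ℝ) (ht : 0 ≤ t) :
    ∫ s in (0:ℝ)..t, (1 + s)⁻¹ ≤ 2 * Real.sqrt (1 + t) := by
  have hderiv : ∀ x ∈ Set.uIcc (0:ℝ) t,
      HasDerivAt (fun s : ℝ => Real.log (1 + s)) ((1 + x)⁻¹) x := by
    intro x hx
    rw [Set.uIcc_of_le ht] at hx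
    have hX : (0:ℝ) < 1 + x := by have := hx.1; linarith
    have h1 : HasDerivAt (fun s : ℝ => 1 + s) 1 x := (hasDerivAt_id x).const_add 1
    have h2 := (Real.hasDerivAt_log (ne_of_gt hX)).comp x h1
    rw [mul_one] at h2; exact h2
  have hcont : IntervalIntegrable (fun s : ℝ => (1 + s)⁻¹) volume 0 t := by
    apply ContinuousOn.intervalIntegrable
    apply ContinuousOn.inv₀
    · fun_prop
    · intro x hx
      rw [Set.uIcc_of_le ht] at hx
      have hX : (0:ℝ) < 1 + x := by have := hx.1; linarith
      exact ne_of_gt hX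
  rw [integral_eq_sub_of_hasDerivAt hderiv hcont]
  have hst : (0:ℝ) < Real.sqrt (1 + t) := Real.sqrt_pos.2 (by linarith)
  have hlog : Real.log (1 + t) = 2 * Real.log (Real.sqrt (1 + t)) := by
    rw [Real.log_sqrt (by linarith)]; ring
  have := Real.log_le_sub_one_of_pos hst
  simp only [add_zero, Real.log_one, sub_zero]
  linarith

lemma gg_int (t : ℝ) (ht : 0 ≤ t) : ∫ s in (0:ℝ)..t, gg s ≤ 4 := by
  have hcont : IntervalIntegrable (fun s : ℝ => 2 * ((1 + s) * Real.sqrt (1 + s))⁻¹)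
      volume 0 t := by
    apply ContinuousOn.intervalIntegrable
    apply ContinuousOn.mul continuousOn_const
    apply ContinuousOn.inv₀
    · fun_prop
    · intro x hx
      rw [Set.uIcc_of_le ht] at hx
      have hX : (0:ℝ) < 1 + x := by have := hx.1; linarith
      positivity
  calc ∫ s in (0:ℝ)..t, gg s
      ≤ ∫ s in (0:ℝ)..t, 2 * ((1 + s) * Real.sqrt (1 + s))⁻¹ := by
        apply integral_mono_on ht (gg_cont.intervalIntegrable _ _) hcont
        intro s hs
        exact gg_le2 s hs.1
    _ = 2 * ∫ s in (0:ℝ)..t, ((1 + s) * Real.sqrt (1 + s))⁻¹ := integral_const_mul 2 _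
    _ ≤ 2 * 2 := by
        have := int32 t ht
        linarith
    _ = 4 := by norm_num

lemma hh_conv_int (t : ℝ) (ht : 0 ≤ t) :
    ∫ s in (0:ℝ)..t, hh (t - s) ≤ 4 * Real.sqrt (1 + t) := by
  rw [integral_comp_sub_left hh t, sub_self, sub_zero]
  have hcont : IntervalIntegrable (fun s : ℝ => 2 * (1 + s)⁻¹) volume 0 t := by
    apply ContinuousOn.intervalIntegrable
    apply ContinuousOn.mul continuousOn_const
    apply ContinuousOn.inv₀
    · fun_prop
    · intro x hx
      rw [Set.uIcc_of_le ht] at hx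
      have hX : (0:ℝ) < 1 + x := by have := hx.1; linarith
      exact ne_of_gt hX
  calc ∫ s in (0:ℝ)..t, hh s ≤ ∫ s in (0:ℝ)..t, 2 * (1 + s)⁻¹ := by
        apply integral_mono_on ht (hh_cont.intervalIntegrable _ _) hcont
        intro s hs
        have := hh_le s hs.1
        rw [div_eq_mul_inv] at this
        exact this
    _ = 2 * ∫ s in (0:ℝ)..t, (1 + s)⁻¹ := integral_const_mul 2 _
    _ ≤ 2 * (2 * Real.sqrt (1 + t)) := by
        have := intlog t ht
        nlinarith []
    _ = 4 * Real.sqrt (1 + t) := by ring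

lemma kernel_ptwise (t s : ℝ) (ht : 0 ≤ t) (hs : 0 ≤ s) (hst : s ≤ t) :
    hh (t - s) * gg s ≤ 4 * (1 + t)⁻¹ * gg s
      + 8 * ((1 + t) * Real.sqrt (1 + t))⁻¹ * hh (t - s) := by
  have hQ : (0:ℝ) < (1 + t) * Real.sqrt (1 + t) := by positivity
  rcases le_or_gt s (t / 2) with hc | hc
  · have hts0 : 0 ≤ t - s := by linarith
    have h1 : hh (t - s) ≤ 4 * (1 + t)⁻¹ := by
      refine (hh_le _ hts0).trans ?_
      rw [show 4 * (1 + t)⁻¹ = 4 / (1 + t) from by rw [div_eq_mul_inv],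
        div_le_div_iff₀ (by linarith : (0:ℝ) < 1 + (t - s)) (by linarith : (0:ℝ) < 1 + t)]
      nlinarith
    have : hh (t - s) * gg s ≤ 4 * (1 + t)⁻¹ * gg s :=
      mul_le_mul_of_nonneg_right h1 (gg_nonneg s)
    refine this.trans ?_
    have : (0:ℝ) ≤ 8 * ((1 + t) * Real.sqrt (1 + t))⁻¹ * hh (t - s) := by
      have := hh_nonneg (t - s); positivity
    linarith
  · have h1 : gg s ≤ 8 * ((1 + t) * Real.sqrt (1 + t))⁻¹ := gg_le_Q t s ht hc.le
    have : hh (t - s) * gg s ≤ hh (t - s) * (8 * ((1 + t) * Real.sqrt (1 + t))⁻¹) :=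
      mul_le_mul_of_nonneg_left h1 (hh_nonneg _)
    refine this.trans ?_
    have h2 : (0:ℝ) ≤ 4 * (1 + t)⁻¹ * gg s := by
      have := gg_nonneg s
      positivity
    linarith [mul_comm (hh (t - s)) (8 * ((1 + t) * Real.sqrt (1 + t))⁻¹)]

lemma kernel_int (t : ℝ) (ht : 0 ≤ t) :
    ∫ s in (0:ℝ)..t, hh (t - s) * gg s ≤ 48 * (1 + t)⁻¹ := by
  have hQ : (0:ℝ) < Real.sqrt (1 + t) := Real.sqrt_pos.2 (by linarith)
  have hcontL : Continuous fun s : ℝ => hh (t - s) * gg s :=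
    (hh_cont.comp (continuous_const.sub continuous_id)).mul gg_cont
  have hcontR : Continuous fun s : ℝ => 4 * (1 + t)⁻¹ * gg s
      + 8 * ((1 + t) * Real.sqrt (1 + t))⁻¹ * hh (t - s) :=
    ((continuous_const.mul gg_cont).add
      (continuous_const.mul (hh_cont.comp (continuous_const.sub continuous_id))))
  calc ∫ s in (0:ℝ)..t, hh (t - s) * gg s
      ≤ ∫ s in (0:ℝ)..t, (4 * (1 + t)⁻¹ * gg s
          + 8 * ((1 + t) * Real.sqrt (1 + t))⁻¹ * hh (t - s)) := by
        apply integral_mono_on ht (hcontL.intervalIntegrable _ _)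
          (hcontR.intervalIntegrable _ _)
        intro s hs
        exact kernel_ptwise t s ht hs.1 hs.2
    _ = 4 * (1 + t)⁻¹ * (∫ s in (0:ℝ)..t, gg s)
        + 8 * ((1 + t) * Real.sqrt (1 + t))⁻¹ * ∫ s in (0:ℝ)..t, hh (t - s) := by
        have i1 : IntervalIntegrable (fun s : ℝ => 4 * (1 + t)⁻¹ * gg s) volume 0 t :=
          (continuous_const.mul gg_cont).intervalIntegrable _ _
        have i2 : IntervalIntegrable
            (fun s : ℝ => 8 * ((1 + t) * Real.sqrt (1 + t))⁻¹ * hh (t - s)) volume 0 t :=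
          (continuous_const.mul (hh_cont.comp (continuous_const.sub continuous_id))).intervalIntegrable _ _
        rw [integral_add i1 i2, intervalIntegral.integral_const_mul, intervalIntegral.integral_const_mul]
    _ ≤ 4 * (1 + t)⁻¹ * 4
        + 8 * ((1 + t) * Real.sqrt (1 + t))⁻¹ * (4 * Real.sqrt (1 + t)) := by
        have h1 := gg_int t ht
        have h2 := hh_conv_int t ht
        have hp1 : (0:ℝ) ≤ 4 * (1 + t)⁻¹ := by positivity
        have hp2 : (0:ℝ) ≤ 8 * ((1 + t) * Real.sqrt (1 + t))⁻¹ := by positivity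
        exact add_le_add (mul_le_mul_of_nonneg_left h1 hp1)
          (mul_le_mul_of_nonneg_left h2 hp2)
    _ = 48 * (1 + t)⁻¹ := by
        have h1t : (1 + t) ≠ 0 := by linarith
        have hQ' : Real.sqrt (1 + t) ≠ 0 := ne_of_gt hQ
        field_simp
        ring

/-- If random variables `r(s)` satisfy `E|r(s)|² ≤ C ⟨s⟩⁻¹` (`⟨s⟩ = √(1+s²)`), then
`E |∫₀^t r(t-s) ⟨s⟩^{-3/2} ds|² ≤ C₁ (1+t)⁻¹` for all `t ≥ 0`. -/
theorem second_moment_convolution_decay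
    {Ω : Type*} [MeasurableSpace Ω] (μ : Measure Ω) [IsProbabilityMeasure μ]
    (r : ℝ → Ω → ℝ) (hmeas : Measurable (Function.uncurry r))
    (hint : ∀ s, Integrable (fun ω => (r s ω) ^ 2) μ)
    (C : ℝ)
    (hr : ∀ s, 0 ≤ s → ∫ ω, (r s ω) ^ 2 ∂μ ≤ C * ((1 + s ^ 2) ^ (-(1 : ℝ) / 2))) :
    ∃ C₁ : ℝ, ∀ t, 0 ≤ t →
      ∫ ω, (∫ s in (0:ℝ)..t, r (t - s) ω * (1 + s ^ 2) ^ (-(3 : ℝ) / 4)) ^ 2 ∂μ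
        ≤ C₁ * (1 + t)⁻¹ := by
  refine ⟨192 * C, fun t ht => ?_⟩
  have hC : 0 ≤ C := by
    have h0 := hr 0 le_rfl
    have h1 : (0:ℝ) ≤ ∫ ω, (r 0 ω) ^ 2 ∂μ := integral_nonneg fun ω => sq_nonneg _
    simp only [ne_eq, OfNat.ofNat_ne_zero, not_false_eq_true, zero_pow, add_zero,
      Real.one_rpow, mul_one] at h0
    linarith
  set ν := volume.restrict (Set.Ioc (0:ℝ) t) with hν
  haveI hfin : IsFiniteMeasure ν := by
    constructor
    rw [hν, Measure.restrict_apply_univ]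
    simp [Real.volume_Ioc]
  -- fold gg / hh and interval integrals
  have hggfold : ∀ s : ℝ, (1 + s ^ 2) ^ (-(3 : ℝ) / 4) = gg s := fun s => rfl
  simp only [hggfold, intervalIntegral.integral_of_le ht]
  -- joint measurability
  have hrm : Measurable fun p : ℝ × Ω => r (t - p.1) p.2 :=
    hmeas.comp ((measurable_const.sub measurable_fst).prodMk measurable_snd)
  have hFm : Measurable fun p : ℝ × Ω => (r (t - p.1) p.2) ^ 2 * gg p.1 :=
    (hrm.pow_const 2).mul (gg_cont.measurable.comp measurable_fst)
  -- the second moment function of s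
  have hEnn : ∀ s : ℝ, 0 ≤ ∫ ω, (r (t - s) ω) ^ 2 ∂μ :=
    fun s => integral_nonneg fun ω => sq_nonneg _
  have heq : ∀ s : ℝ, (∫ ω, ‖(r (t - s) ω) ^ 2 * gg s‖ ∂μ)
      = (∫ ω, (r (t - s) ω) ^ 2 ∂μ) * gg s := by
    intro s
    rw [← MeasureTheory.integral_mul_const]
    refine integral_congr_ae (ae_of_all _ fun ω => ?_)
    exact Real.norm_of_nonneg (mul_nonneg (sq_nonneg _) (gg_nonneg s))
  -- product integrability
  have hFint : Integrable (fun p : ℝ × Ω => (r (t - p.1) p.2) ^ 2 * gg p.1) (ν.prod μ) := by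
    refine (integrable_prod_iff hFm.aestronglyMeasurable).2 ⟨?_, ?_⟩
    · exact ae_of_all _ fun s => (hint (t - s)).mul_const (gg s)
    · have hm : AEStronglyMeasurable
          (fun s : ℝ => ∫ ω, ‖(r (t - s) ω) ^ 2 * gg s‖ ∂μ) ν :=
        hFm.aestronglyMeasurable.norm.integral_prod_right'
      refine Integrable.mono' (integrable_const C) hm ?_
      rw [hν, ae_restrict_iff' measurableSet_Ioc]
      refine ae_of_all _ fun s hs => ?_
      have hts : 0 ≤ t - s := by linarith [hs.2]
      have hb : (∫ ω, (r (t - s) ω) ^ 2 ∂μ) ≤ C := by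
        refine (hr (t - s) hts).trans ?_
        have := hh_le_one (t - s)
        rw [show ((1 + (t - s) ^ 2) ^ (-(1:ℝ) / 2)) = hh (t - s) from rfl]
        nlinarith [hh_nonneg (t - s)]
      rw [Real.norm_of_nonneg (by rw [heq]; exact mul_nonneg (hEnn s) (gg_nonneg s)), heq]
      calc (∫ ω, (r (t - s) ω) ^ 2 ∂μ) * gg s ≤ C * 1 := by
            apply mul_le_mul hb (gg_le_one s) (gg_nonneg s) hC
        _ = C := mul_one C
  have hae_int : ∀ᵐ ω ∂μ, Integrable (fun s => (r (t - s) ω) ^ 2 * gg s) ν :=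
    hFint.prod_left_ae
  have hYint : Integrable (fun ω => ∫ s, (r (t - s) ω) ^ 2 * gg s ∂ν) μ :=
    hFint.integral_prod_right
  have hggint : Integrable gg ν := gg_cont.integrableOn_Ioc
  set A := ∫ s, gg s ∂ν with hA
  have hA0 : 0 ≤ A := integral_nonneg fun s => gg_nonneg s
  have hA4 : A ≤ 4 := by
    have := gg_int t ht
    rwa [intervalIntegral.integral_of_le ht] at this
  -- Cauchy–Schwarz pointwise in ω
  have hCS : ∀ᵐ ω ∂μ, (∫ s, r (t - s) ω * gg s ∂ν) ^ 2
      ≤ A * ∫ s, (r (t - s) ω) ^ 2 * gg s ∂ν := by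
    filter_upwards [hae_int] with ω hω
    exact cs_weight ν (fun s => r (t - s) ω) gg gg_nonneg
      ((hmeas.comp ((measurable_const.sub measurable_id).prodMk
        measurable_const)).aestronglyMeasurable)
      gg_cont.measurable.aestronglyMeasurable hω hggint
  have step1 : ∫ ω, (∫ s, r (t - s) ω * gg s ∂ν) ^ 2 ∂μ
      ≤ ∫ ω, A * ∫ s, (r (t - s) ω) ^ 2 * gg s ∂ν ∂μ :=
    integral_mono_of_nonneg (ae_of_all _ fun ω => sq_nonneg _) (hYint.const_mul A) hCS
  have hswap : ∫ s, (∫ ω, (r (t - s) ω) ^ 2 * gg s ∂μ) ∂ν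
      = ∫ ω, (∫ s, (r (t - s) ω) ^ 2 * gg s ∂ν) ∂μ :=
    integral_integral_swap hFint
  set X := ∫ s, (∫ ω, (r (t - s) ω) ^ 2 ∂μ) * gg s ∂ν with hX
  have hX0 : 0 ≤ X := integral_nonneg fun s => mul_nonneg (hEnn s) (gg_nonneg s)
  have step2 : ∫ ω, A * ∫ s, (r (t - s) ω) ^ 2 * gg s ∂ν ∂μ = A * X := by
    rw [MeasureTheory.integral_const_mul, ← hswap, hX]
    congr 1
    refine integral_congr_ae (ae_of_all _ fun s => ?_)
    exact MeasureTheory.integral_mul_const _ _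
  -- X is integrable-comparable with the deterministic kernel
  have hXle : X ≤ C * (48 * (1 + t)⁻¹) := by
    have hRHScont : Continuous fun s : ℝ => C * (hh (t - s) * gg s) :=
      continuous_const.mul ((hh_cont.comp (continuous_const.sub continuous_id)).mul gg_cont)
    have hLint : Integrable (fun s : ℝ => (∫ ω, (r (t - s) ω) ^ 2 ∂μ) * gg s) ν := by
      have h3 := ((integrable_prod_iff hFm.aestronglyMeasurable).1 hFint).2
      refine h3.congr (ae_of_all _ fun s => heq s)
    have step3 : X ≤ ∫ s, C * (hh (t - s) * gg s) ∂ν := by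
      rw [hX, hν]
      refine setIntegral_mono_on hLint hRHScont.integrableOn_Ioc measurableSet_Ioc ?_
      intro s hs
      have hts : 0 ≤ t - s := by linarith [hs.2]
      calc (∫ ω, (r (t - s) ω) ^ 2 ∂μ) * gg s ≤ (C * hh (t - s)) * gg s :=
            mul_le_mul_of_nonneg_right (hr (t - s) hts) (gg_nonneg s)
        _ = C * (hh (t - s) * gg s) := by ring
    refine step3.trans ?_
    rw [MeasureTheory.integral_const_mul]
    have hker : ∫ s, hh (t - s) * gg s ∂ν ≤ 48 * (1 + t)⁻¹ := by
      have := kernel_int t ht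
      rwa [intervalIntegral.integral_of_le ht] at this
    exact mul_le_mul_of_nonneg_left hker hC
  calc ∫ ω, (∫ s, r (t - s) ω * gg s ∂ν) ^ 2 ∂μ
      ≤ A * X := by rw [← step2]; exact step1
    _ ≤ 4 * X := mul_le_mul_of_nonneg_right hA4 hX0
    _ ≤ 4 * (C * (48 * (1 + t)⁻¹)) := mul_le_mul_of_nonneg_left hXle (by norm_num)
    _ = 192 * C * (1 + t)⁻¹ := by ring
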